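/- Let X be a Banach space and M, N, L closed subspaces of X such that L is complemented in both M and N, with M = L ⊕ M₁ and N = L ⊕ N₁ for closed subspaces M₁, N₁. Then M and N have a common complement in X if and only if M₁ and N₁ have a common complement K in X such that L is complemented in K. -/

import Mathlib

open Submodule

lemma isClosed_sup_of_proj {X : Type*} [NormedAddCommGroup X] [NormedSpace ℝ X]
    [CompleteSpace X] (L M₁ M K : Submodule ℝ X)
    (hL : IsClosed (L : Set X)) (hM₁ : IsClosed (M₁ : Set X)) (hM : IsClosed (M : Set X))
    (hK : IsClosed (K : Set X)) (hdM : L ⊓ M₁ = ⊥) (hsM : L ⊔ M₁ = M)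
    (hc : IsCompl M K) : IsClosed ((L ⊔ K : Submodule ℝ X) : Set X) := by
  have hLM : L ≤ M := hsM ▸ le_sup_left
  have hM₁M : M₁ ≤ M := hsM ▸ le_sup_right
  haveI : CompleteSpace M := hM.completeSpace_coe
  set P := M.linearProjOfClosedCompl K hc hM hK with hP
  set L' : Submodule ℝ M := L.comap M.subtype with hL'
  set M₁' : Submodule ℝ M := M₁.comap M.subtype with hM₁'
  have hL'c : IsClosed (L' : Set M) := hL.preimage continuous_subtype_val
  have hM₁'c : IsClosed (M₁' : Set M) := hM₁.preimage continuous_subtype_val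
  have hc' : IsCompl M₁' L' := by
    constructor
    · rw [disjoint_iff, eq_bot_iff]
      rintro ⟨x, hx⟩ h
      simp only [Submodule.mem_inf, Submodule.mem_comap] at h
      have : x ∈ L ⊓ M₁ := ⟨h.2, h.1⟩
      rw [hdM, Submodule.mem_bot] at this
      simpa [Submodule.mem_bot, Subtype.ext_iff] using this
    · rw [codisjoint_iff, eq_top_iff]
      rintro ⟨x, hx⟩ -
      have : x ∈ L ⊔ M₁ := hsM ▸ hx
      obtain ⟨l, hl, m, hm, rfl⟩ := Submodule.mem_sup.1 this
      have heq : (⟨l + m, hx⟩ : M) = ⟨m, hM₁M hm⟩ + ⟨l, hLM hl⟩ := by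
        ext; simp [add_comm]
      rw [heq]
      refine Submodule.add_mem _ (Submodule.mem_sup_left ?_) (Submodule.mem_sup_right ?_)
      · simpa [hM₁', Submodule.mem_comap] using hm
      · simpa [hL', Submodule.mem_comap] using hl
  set Q := M₁'.linearProjOfClosedCompl L' hc' hM₁'c hL'c with hQ
  set S := Q.comp P with hS
  have key : L ⊔ K = LinearMap.ker (S : X →ₗ[ℝ] M₁') := by
    apply le_antisymm
    · refine sup_le ?_ ?_
      · intro l hl
        simp only [LinearMap.mem_ker, ContinuousLinearMap.coe_coe]
        have h1 : P l = ⟨l, hLM hl⟩ := by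
          have := Submodule.projectionOnto_apply_left hc ⟨l, hLM hl⟩
          simpa [hP, coe_continuous_linearProjOfClosedCompl'] using this
        have hmem : (⟨l, hLM hl⟩ : M) ∈ L' := by simpa [hL', Submodule.mem_comap] using hl
        have h2 : Q ⟨l, hLM hl⟩ = 0 := by
          simpa [hQ, coe_continuous_linearProjOfClosedCompl'] using Submodule.projectionOnto_apply_of_mem_right hc' hmem
        simp [hS, h1, h2]
      · intro k hk
        simp only [LinearMap.mem_ker, ContinuousLinearMap.coe_coe]
        have h1 : P k = 0 := by
          simpa [hP, coe_continuous_linearProjOfClosedCompl'] using Submodule.projectionOnto_apply_of_mem_right hc hk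
        simp [hS, h1]
    · intro x hx
      simp only [LinearMap.mem_ker, ContinuousLinearMap.coe_coe] at hx
      have hx' : Q (P x) = 0 := by simpa [hS] using hx
      have hPx : P x ∈ L' := by
        rw [hQ] at hx'
        simpa using (Submodule.projectionOnto_apply_eq_zero_iff hc').1 (by simpa [coe_continuous_linearProjOfClosedCompl'] using hx')
      have h1 : ((P x : M) : X) ∈ L := hPx
      have h2 : (K.projectionOnto M hc.symm x : X) ∈ K := Submodule.coe_mem _
      have h3 : ((P x : M) : X) + (K.projectionOnto M hc.symm x : X) = x := by
        simpa [hP, coe_continuous_linearProjOfClosedCompl'] using Submodule.projection_add_projection_eq_self hc x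
      rw [← h3]
      exact Submodule.add_mem_sup h1 h2
  rw [key]
  exact ContinuousLinearMap.isClosed_ker S

theorem stmt_4 {X : Type*} [NormedAddCommGroup X] [NormedSpace ℝ X] [CompleteSpace X]
    (M N L M₁ N₁ : Submodule ℝ X)
    (hM : IsClosed (M : Set X)) (hN : IsClosed (N : Set X)) (hL : IsClosed (L : Set X))
    (hM₁ : IsClosed (M₁ : Set X)) (hN₁ : IsClosed (N₁ : Set X))
    (hdM : L ⊓ M₁ = ⊥) (hsM : L ⊔ M₁ = M) (hdN : L ⊓ N₁ = ⊥) (hsN : L ⊔ N₁ = N) :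
    (∃ K : Submodule ℝ X, IsClosed (K : Set X) ∧
        M ⊓ K = ⊥ ∧ M ⊔ K = ⊤ ∧ N ⊓ K = ⊥ ∧ N ⊔ K = ⊤) ↔
      (∃ K : Submodule ℝ X, IsClosed (K : Set X) ∧
        M₁ ⊓ K = ⊥ ∧ M₁ ⊔ K = ⊤ ∧ N₁ ⊓ K = ⊥ ∧ N₁ ⊔ K = ⊤ ∧
        ∃ K' : Submodule ℝ X, IsClosed (K' : Set X) ∧ L ⊓ K' = ⊥ ∧ L ⊔ K' = K) := by
  have hLM : L ≤ M := hsM ▸ le_sup_left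
  have hLN : L ≤ N := hsN ▸ le_sup_left
  constructor
  · rintro ⟨K, hKc, hMKd, hMKs, hNKd, hNKs⟩
    have hcM : IsCompl M K := ⟨disjoint_iff.mpr hMKd, codisjoint_iff.mpr hMKs⟩
    refine ⟨L ⊔ K, isClosed_sup_of_proj L M₁ M K hL hM₁ hM hKc hdM hsM hcM, ?_, ?_, ?_, ?_,
      K, hKc, ?_, rfl⟩
    · -- M₁ ⊓ (L ⊔ K) = ⊥
      rw [eq_bot_iff]
      rintro x ⟨hxM₁, hxLK⟩
      obtain ⟨l, hl, k, hk, rfl⟩ := Submodule.mem_sup.1 hxLK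
      have hkM : k ∈ M := by
        have : k = (l + k) - l := by abel
        rw [this]
        exact M.sub_mem (hsM ▸ Submodule.mem_sup_right hxM₁ :
          (l + k) ∈ M) (hLM hl)
      have hk0 : k = 0 := by
        have : k ∈ M ⊓ K := ⟨hkM, hk⟩
        rwa [hMKd, Submodule.mem_bot] at this
      subst hk0
      have : l + 0 ∈ L ⊓ M₁ := ⟨by simpa using hl, hxM₁⟩
      rwa [hdM, Submodule.mem_bot] at this
    · rw [← sup_assoc, sup_comm M₁ L, hsM, hMKs]
    · -- N₁ ⊓ (L ⊔ K) = ⊥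
      rw [eq_bot_iff]
      rintro x ⟨hxN₁, hxLK⟩
      obtain ⟨l, hl, k, hk, rfl⟩ := Submodule.mem_sup.1 hxLK
      have hkN : k ∈ N := by
        have : k = (l + k) - l := by abel
        rw [this]
        exact N.sub_mem (hsN ▸ Submodule.mem_sup_right hxN₁ : (l + k) ∈ N) (hLN hl)
      have hk0 : k = 0 := by
        have : k ∈ N ⊓ K := ⟨hkN, hk⟩
        rwa [hNKd, Submodule.mem_bot] at this
      subst hk0
      have : l + 0 ∈ L ⊓ N₁ := ⟨by simpa using hl, hxN₁⟩
      rwa [hdN, Submodule.mem_bot] at this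
    · rw [← sup_assoc, sup_comm N₁ L, hsN, hNKs]
    · -- L ⊓ K = ⊥
      rw [eq_bot_iff]
      intro x hx
      have : x ∈ M ⊓ K := ⟨hLM hx.1, hx.2⟩
      rwa [hMKd] at this
  · rintro ⟨K, hKc, hM₁Kd, hM₁Ks, hN₁Kd, hN₁Ks, K', hK'c, hLK'd, hLK's⟩
    have hK'K : K' ≤ K := hLK's ▸ le_sup_right
    have hLK : L ≤ K := hLK's ▸ le_sup_left
    refine ⟨K', hK'c, ?_, ?_, ?_, ?_⟩
    · rw [eq_bot_iff]
      rintro x ⟨hxM, hxK'⟩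
      obtain ⟨l, hl, m, hm, rfl⟩ := Submodule.mem_sup.1 (hsM ▸ hxM : (x : X) ∈ L ⊔ M₁)
      have hmK : m ∈ K := by
        have : m = (l + m) - l := by abel
        rw [this]
        exact K.sub_mem (hK'K hxK') (hLK hl)
      have hm0 : m = 0 := by
        have : m ∈ M₁ ⊓ K := ⟨hm, hmK⟩
        rwa [hM₁Kd, Submodule.mem_bot] at this
      subst hm0
      have : l + 0 ∈ L ⊓ K' := ⟨by simpa using hl, hxK'⟩
      rwa [hLK'd, Submodule.mem_bot] at this
    · calc M ⊔ K' = (L ⊔ M₁) ⊔ K' := by rw [hsM]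
        _ = M₁ ⊔ (L ⊔ K') := by rw [sup_comm L M₁, sup_assoc]
        _ = ⊤ := by rw [hLK's, hM₁Ks]
    · rw [eq_bot_iff]
      rintro x ⟨hxN, hxK'⟩
      obtain ⟨l, hl, m, hm, rfl⟩ := Submodule.mem_sup.1 (hsN ▸ hxN : (x : X) ∈ L ⊔ N₁)
      have hmK : m ∈ K := by
        have : m = (l + m) - l := by abel
        rw [this]
        exact K.sub_mem (hK'K hxK') (hLK hl)
      have hm0 : m = 0 := by
        have : m ∈ N₁ ⊓ K := ⟨hm, hmK⟩
        rwa [hN₁Kd, Submodule.mem_bot] at this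
      subst hm0
      have : l + 0 ∈ L ⊓ K' := ⟨by simpa using hl, hxK'⟩
      rwa [hLK'd, Submodule.mem_bot] at this
    · calc N ⊔ K' = (L ⊔ N₁) ⊔ K' := by rw [hsN]
        _ = N₁ ⊔ (L ⊔ K') := by rw [sup_comm L N₁, sup_assoc]
        _ = ⊤ := by rw [hLK's, hN₁Ks]
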